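/- Suppose c ∈ H_s, c ∉ H_t, and ρ(c) ∘ ρ(c) = id. Then the trace of ρ(c) ⊗ 1 restricted to ker(J_s⊗1 - j·id) ⊆ V ⊗_F E is 0. (Proposition 3.1.5(b) combined with Corollary 3.1.4(b): when the biquadratic field is not totally real, the 2-dimensional constituent σ_u is odd at the complex conjugation.) -/

import Mathlib

open LinearMap Module TensorProduct

set_option maxHeartbeats 1000000



lemma aux_two_ne_zero {F : Type*} [Field F] (hF : ¬ IsSquare (-1 : F)) : (2 : F) ≠ 0 := by
  intro h
  exact hF ⟨1, by linear_combination -h⟩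

lemma aux_baseChange_neg {F E : Type*} [Field F] [Field E] [Algebra F E]
    {V : Type*} [AddCommGroup V] [Module F V] (f : V →ₗ[F] V) :
    (-f).baseChange E = -(f.baseChange E) := by
  simpa using map_neg (LinearMap.baseChangeHom F E V V) f

lemma aux_trace_sq_neg_one {F E : Type*} [Field F] [Field E] [Algebra F E]
    (hF : ¬ IsSquare (-1 : F)) (j : E) (hj : j ^ 2 = -1)
    {V : Type*} [AddCommGroup V] [Module F V] [FiniteDimensional F V]
    (A : V →ₗ[F] V) (hA : A ∘ₗ A = -LinearMap.id) :
    LinearMap.trace F V A = 0 := by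
  classical
  haveI : Module.Finite E (E ⊗[F] V) := Module.Finite.base_change F E V
  set B : Module.End E (E ⊗[F] V) := A.baseChange E with hB
  have hBB : B * B = -1 := by
    have h1 : (A ∘ₗ A).baseChange E = (-LinearMap.id : V →ₗ[F] V).baseChange E := by rw [hA]
    rw [LinearMap.baseChange_comp, aux_baseChange_neg, LinearMap.baseChange_id] at h1
    exact h1
  have h2E : (2 : E) ≠ 0 := by
    intro h
    apply aux_two_ne_zero hF
    apply (algebraMap F E).injective
    rw [map_ofNat, map_zero, h]
  set u : Module.End E (E ⊗[F] V) := j • B with hu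
  have huu : u * u = 1 := by
    rw [hu, smul_mul_assoc, mul_smul_comm, smul_smul, ← pow_two, hj, hBB, neg_smul (M := (Module.End E (E ⊗[F] V))), one_smul,
      neg_neg (a := (1 : (Module.End E (E ⊗[F] V))))]
  have hBu : B * u = -(j • (1 : Module.End E (E ⊗[F] V))) := by
    rw [hu, mul_smul_comm, hBB, smul_neg j (1 : (Module.End E (E ⊗[F] V)))]
  have huB : u = j • B := hu
  set Q1 : Module.End E (E ⊗[F] V) := (2 : E)⁻¹ • (1 - u) with hQ1
  set Q2 : Module.End E (E ⊗[F] V) := (2 : E)⁻¹ • (1 + u) with hQ2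
  have hsum : Q1 + Q2 = 1 := by
    rw [hQ1, hQ2, ← smul_add]
    have h : (1 - u) + (1 + u) = (2 : E) • 1 := by
      rw [two_smul]; abel
    rw [h, smul_smul, inv_mul_cancel₀ h2E, one_smul]
  have hhalf : ((2 : E)⁻¹ * 2⁻¹) • ((2 : E) • (1 - u)) = Q1 := by
    rw [smul_smul, hQ1]
    congr 1
    field_simp
  have hhalf2 : ((2 : E)⁻¹ * 2⁻¹) • ((2 : E) • (1 + u)) = Q2 := by
    rw [smul_smul, hQ2]
    congr 1
    field_simp
  have hQ1sq : Q1 * Q1 = Q1 := by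
    rw [hQ1, smul_mul_assoc, mul_smul_comm, smul_smul]
    rw [show (1 - u) * (1 - u) = 1 - u - u + u * u by rw [sub_mul (1 : (Module.End E (E ⊗[F] V))) u, one_mul, mul_sub u 1 u, mul_one]; abel, huu,
      show (1 : Module.End E (E ⊗[F] V)) - u - u + 1 = (2:E) • (1 - u) by
        rw [two_smul]; abel]
    exact hhalf
  have hQ2sq : Q2 * Q2 = Q2 := by
    rw [hQ2, smul_mul_assoc, mul_smul_comm, smul_smul]
    rw [show (1 + u) * (1 + u) = 1 + u + u + u * u by rw [add_mul, one_mul, mul_add, mul_one]; abel, huu,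
      show (1 : Module.End E (E ⊗[F] V)) + u + u + 1 = (2:E) • (1 + u) by
        rw [two_smul]; abel]
    exact hhalf2
  have hBQ1 : B * Q1 = j • Q1 := by
    rw [hQ1, mul_smul_comm, smul_comm j]
    congr 1
    rw [mul_sub B, mul_one, hBu, smul_sub j (1 : (Module.End E (E ⊗[F] V))) u, huB, smul_smul, ← pow_two, hj, neg_smul (M := (Module.End E (E ⊗[F] V))), one_smul]
    abel
  have hcore : B * (1 + u) = -(j • (1 + u)) := by
    rw [mul_add, mul_one, hBu, smul_add, huB, smul_smul, ← pow_two, hj, neg_smul (M := (Module.End E (E ⊗[F] V))), one_smul]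
    abel
  have hBQ2 : B * Q2 = -(j • Q2) := by
    rw [hQ2, mul_smul_comm, hcore, smul_neg ((2:E)⁻¹) (j • (1 + u) : (Module.End E (E ⊗[F] V))), smul_comm ((2:E)⁻¹) j]
  have hproj1 : LinearMap.IsProj (LinearMap.range Q1) Q1 :=
    ⟨fun x => LinearMap.mem_range_self _ x, by
      rintro x ⟨y, rfl⟩
      exact congrFun (congrArg DFunLike.coe hQ1sq) y⟩
  have hproj2 : LinearMap.IsProj (LinearMap.range Q2) Q2 :=
    ⟨fun x => LinearMap.mem_range_self _ x, by
      rintro x ⟨y, rfl⟩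
      exact congrFun (congrArg DFunLike.coe hQ2sq) y⟩
  set r1 := Module.finrank E (LinearMap.range Q1) with hr1
  set r2 := Module.finrank E (LinearMap.range Q2) with hr2
  have htr1 : LinearMap.trace E _ Q1 = (r1 : E) := by
    haveI : Module.Free E (LinearMap.range Q1) := Module.Free.of_divisionRing E (LinearMap.range Q1)
    haveI : Module.Free E (LinearMap.ker Q1) := Module.Free.of_divisionRing E (LinearMap.ker Q1)
    exact hproj1.trace
  have htr2 : LinearMap.trace E _ Q2 = (r2 : E) := by
    haveI : Module.Free E (LinearMap.range Q2) := Module.Free.of_divisionRing E (LinearMap.range Q2)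
    haveI : Module.Free E (LinearMap.ker Q2) := Module.Free.of_divisionRing E (LinearMap.ker Q2)
    exact hproj2.trace
  clear_value Q1 Q2
  have htrB : LinearMap.trace E _ B = j * ((r1 : E) - (r2 : E)) := by
    have hsplit : B = B * Q1 + B * Q2 := by rw [← mul_add, hsum, mul_one]
    rw [hsplit, map_add, hBQ1, hBQ2, map_smul, map_neg (LinearMap.trace E (E ⊗[F] V)) (j • Q2), map_smul, htr1, htr2, smul_eq_mul, smul_eq_mul]
    ring
  have halg : algebraMap F E (LinearMap.trace F V A) = j * ((r1 : E) - (r2 : E)) := by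
    rw [← htrB, hB, LinearMap.trace_baseChange]
  have hsq : (LinearMap.trace F V A) ^ 2 = -(((r1 : F) - (r2 : F)) ^ 2) := by
    apply (algebraMap F E).injective
    rw [map_pow, halg, map_neg, map_pow, map_sub, map_natCast, map_natCast, mul_pow, hj]
    ring
  set t := LinearMap.trace F V A
  rcases eq_or_ne ((r1 : F) - (r2 : F)) 0 with hd | hd
  · rw [hd] at hsq
    simpa [pow_eq_zero_iff] using hsq
  · exfalso
    apply hF
    refine ⟨t * ((r1 : F) - (r2 : F))⁻¹, ?_⟩
    field_simp
    linear_combination -hsq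

lemma aux_trace_invol {F : Type*} [Field F] (hF : ¬ IsSquare (-1 : F))
    {V : Type*} [AddCommGroup V] [Module F V] [FiniteDimensional F V]
    (f Jt : V →ₗ[F] V) (hJt : Jt ∘ₗ Jt = -LinearMap.id)
    (h : Jt ∘ₗ f = -(f ∘ₗ Jt)) :
    LinearMap.trace F V f = 0 := by
  have hJt' : Jt * Jt = -1 := hJt
  have h' : Jt * f = -(f * Jt) := h
  have key : LinearMap.trace F V (f * Jt * Jt) = 0 := by
    have h1 : LinearMap.trace F V (f * Jt * Jt) = LinearMap.trace F V (Jt * (f * Jt)) :=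
      (LinearMap.trace_mul_comm F (f * Jt) Jt)
    rw [← mul_assoc, h', neg_mul, map_neg] at h1
    have h2 : (2 : F) * LinearMap.trace F V (f * Jt * Jt) = 0 := by linear_combination h1
    exact (mul_eq_zero.1 h2).resolve_left (aux_two_ne_zero hF)
  rw [mul_assoc, hJt', mul_neg_one, map_neg, neg_eq_zero] at key
  exact key

/-- Proposition 3.1.5(b) combined with Corollary 3.1.4(b): for quaternion
multiplication over a biquadratic field which is not totally real (i.e. the complex
conjugation `c` lies in `H_s` but not in `H_t`), if `ρ(c)` is an involution then the
restriction of `ρ(c)` (after base change to `E = F(j)`) to the `+j`-eigenspace of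
`J_s` has trace `0`; i.e. the constituent `σ_u` is odd at the complex conjugation. -/
theorem trace_zero_on_eigenspace_biquadratic_case
    {F E : Type*} [Field F] [Field E] [Algebra F E]
    (hF : ¬ IsSquare (-1 : F)) (hFE : Module.finrank F E = 2)
    (j : E) (hj : j ^ 2 = -1)
    {V : Type*} [AddCommGroup V] [Module F V] [FiniteDimensional F V]
    (hdim : Module.finrank F V = 4)
    {G : Type*} [Group G] (ρ : Representation F G V)
    (Hs Ht : Subgroup G) (hne : Hs ≠ Ht) (hHs : Hs ≠ ⊤) (hHt : Ht ≠ ⊤)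
    (Js Jt : V →ₗ[F] V)
    (hJs : Js ∘ₗ Js = -LinearMap.id) (hJt : Jt ∘ₗ Jt = -LinearMap.id)
    (hanticomm : Js ∘ₗ Jt = -(Jt ∘ₗ Js))
    (hcs : ∀ g ∈ Hs, Js ∘ₗ ρ g = ρ g ∘ₗ Js)
    (has : ∀ g ∉ Hs, Js ∘ₗ ρ g = -(ρ g ∘ₗ Js))
    (hct : ∀ g ∈ Ht, Jt ∘ₗ ρ g = ρ g ∘ₗ Jt)
    (hat : ∀ g ∉ Ht, Jt ∘ₗ ρ g = -(ρ g ∘ₗ Jt))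
    (c : G) (hcHs : c ∈ Hs) (hcHt : c ∉ Ht)
    (hc : ρ c ∘ₗ ρ c = LinearMap.id) :
    ∀ Wp : Submodule E (E ⊗[F] V),
      Wp = LinearMap.ker (Js.baseChange E - j • LinearMap.id) →
      (∀ x ∈ Wp, (ρ c).baseChange E x ∈ Wp) ∧
      ∀ hplus : ∀ x ∈ Wp, (ρ c).baseChange E x ∈ Wp,
        LinearMap.trace E ↥Wp (((ρ c).baseChange E).restrict hplus) = 0 := by
  classical
  haveI : Module.Finite E (E ⊗[F] V) := Module.Finite.base_change F E V
  intro Wp hWp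
  subst hWp
  have h2E : (2 : E) ≠ 0 := by
    intro h
    apply aux_two_ne_zero hF
    apply (algebraMap F E).injective
    rw [map_ofNat, map_zero, h]
  set JE : Module.End E (E ⊗[F] V) := Js.baseChange E with hJE
  set R : Module.End E (E ⊗[F] V) := (ρ c).baseChange E with hR
  have hJEJE : JE * JE = -1 := by
    have h1 : (Js ∘ₗ Js).baseChange E = (-LinearMap.id : V →ₗ[F] V).baseChange E := by rw [hJs]
    rw [LinearMap.baseChange_comp, aux_baseChange_neg, LinearMap.baseChange_id] at h1
    exact h1
  have hcomm : JE * R = R * JE := by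
    have h1 : (Js ∘ₗ ρ c).baseChange E = (ρ c ∘ₗ Js).baseChange E := by rw [hcs c hcHs]
    rw [LinearMap.baseChange_comp, LinearMap.baseChange_comp] at h1
    exact h1
  set D : Module.End E (E ⊗[F] V) := JE - j • LinearMap.id with hD
  have hD1 : D = JE - j • 1 := rfl
  have hmemD : ∀ x : E ⊗[F] V, x ∈ LinearMap.ker D ↔ JE x = j • x := by
    intro x
    rw [LinearMap.mem_ker, hD1, LinearMap.sub_apply, LinearMap.smul_apply,
      Module.End.one_apply, sub_eq_zero]
  have hinv : ∀ x ∈ LinearMap.ker D, R x ∈ LinearMap.ker D := by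
    intro x hx
    rw [hmemD] at hx ⊢
    have h1 : JE (R x) = R (JE x) := by
      have h2 := LinearMap.ext_iff.1 hcomm x
      rwa [Module.End.mul_apply, Module.End.mul_apply] at h2
    rw [h1, hx, map_smul]
  refine ⟨hinv, fun hplus => ?_⟩
  set w : Module.End E (E ⊗[F] V) := j • JE with hw
  set P : Module.End E (E ⊗[F] V) := (2 : E)⁻¹ • (1 - w) with hP
  have hJEw : JE * w = -(j • 1) := by
    rw [hw, mul_smul_comm, hJEJE, smul_neg j (1 : (Module.End E (E ⊗[F] V)))]
  have hjw : j • w = -JE := by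
    rw [hw, smul_smul, ← pow_two, hj, neg_smul (M := (Module.End E (E ⊗[F] V))), one_smul]
  have hDw : D * w = D := by
    rw [hD1, sub_mul JE (j • 1) w, hJEw, smul_mul_assoc, one_mul, hjw]
    abel
  have hDP : D * P = 0 := by
    rw [hP, mul_smul_comm, mul_sub D, mul_one, hDw, sub_self D, smul_zero]
  have hPmem : ∀ x : E ⊗[F] V, P x ∈ LinearMap.ker D := by
    intro x
    rw [LinearMap.mem_ker]
    have h2 := LinearMap.ext_iff.1 hDP x
    rwa [Module.End.mul_apply, LinearMap.zero_apply] at h2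
  have hPid : ∀ x ∈ LinearMap.ker D, P x = x := by
    intro x hx
    rw [hmemD] at hx
    have hwx : w x = -x := by
      rw [hw, LinearMap.smul_apply, hx, smul_smul, ← pow_two, hj, neg_smul, one_smul]
    rw [hP, LinearMap.smul_apply, LinearMap.sub_apply, Module.End.one_apply, hwx,
      sub_neg_eq_add, ← two_smul E x, smul_smul, inv_mul_cancel₀ h2E, one_smul]
  set π : (E ⊗[F] V) →ₗ[E] LinearMap.ker D :=
    LinearMap.codRestrict (LinearMap.ker D) P hPmem with hπ
  have key1 : (LinearMap.ker D).subtype ∘ₗ (R.restrict hplus ∘ₗ π) = R ∘ₗ P := by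
    ext x
    rfl
  have key2 : (R.restrict hplus ∘ₗ π) ∘ₗ (LinearMap.ker D).subtype = R.restrict hplus := by
    apply LinearMap.ext
    rintro ⟨x, hx⟩
    apply Subtype.ext
    show R (P x) = R x
    rw [hPid x hx]
  have htrace_eq : LinearMap.trace E (LinearMap.ker D) (R.restrict hplus)
      = LinearMap.trace E (E ⊗[F] V) (R * P) := by
    haveI : Module.Free E (LinearMap.ker D) := Module.Free.of_divisionRing E (LinearMap.ker D)
    have hcc : LinearMap.trace E (LinearMap.ker D) ((R.restrict hplus ∘ₗ π) ∘ₗ (LinearMap.ker D).subtype)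
        = LinearMap.trace E (E ⊗[F] V) ((LinearMap.ker D).subtype ∘ₗ (R.restrict hplus ∘ₗ π)) :=
      LinearMap.trace_comp_comm' (R := E) (M := ↥(LinearMap.ker D)) (N := E ⊗[F] V) _ _
    rw [← key2, hcc, key1]
    rfl
  have hf1 : LinearMap.trace F V (ρ c) = 0 :=
    aux_trace_invol hF (ρ c) Jt hJt (hat c hcHt)
  have htrR : LinearMap.trace E (E ⊗[F] V) R = 0 := by
    rw [hR, LinearMap.trace_baseChange, hf1, map_zero]
  have hA2 : (ρ c ∘ₗ Js) ∘ₗ (ρ c ∘ₗ Js) = -LinearMap.id := by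
    have h1 : Js * ρ c = ρ c * Js := hcs c hcHs
    have hff : ρ c * ρ c = 1 := hc
    have hgg : Js * Js = -1 := hJs
    show (ρ c * Js) * (ρ c * Js) = -1
    rw [mul_assoc, ← mul_assoc Js, h1, mul_assoc, ← mul_assoc, hff, hgg, one_mul]
  have hf2 : LinearMap.trace F V (ρ c ∘ₗ Js) = 0 :=
    aux_trace_sq_neg_one hF j hj (ρ c ∘ₗ Js) hA2
  have htrRJE : LinearMap.trace E (E ⊗[F] V) (R * JE) = 0 := by
    have h1 : R * JE = ((ρ c ∘ₗ Js).baseChange E : Module.End E (E ⊗[F] V)) := by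
      rw [LinearMap.baseChange_comp]
      rfl
    rw [h1, LinearMap.trace_baseChange, hf2, map_zero]
  have hRP : R * P = (2 : E)⁻¹ • (R - j • (R * JE)) := by
    rw [hP, mul_smul_comm, mul_sub R, mul_one, hw, mul_smul_comm]
  rw [htrace_eq, hRP, map_smul, map_sub (LinearMap.trace E (E ⊗[F] V)), map_smul, htrR, htrRJE, smul_zero, sub_zero,
    smul_zero]
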